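/- The sequence {A, 0, 0, 0, …} (a single entry A followed by zeros), where 0 < A < B, is not the diagonal of any self-adjoint operator with spectrum {0,A,B}, even though with C = ∑_{d_i<A} d_i = 0 and D = ∑_{d_i≥A}(B−d_i) = B−A, the conditions C − D = NA + kB and C ≥ (N+k)A are satisfied with N = 1 and k = −1. -/

import Mathlib

open scoped ENNReal RealInnerProductSpace

noncomputable section

/-- Cauchy–Schwarz for a positive symmetric operator on a real inner product space. -/
lemma aux_cs {H : Type} [NormedAddCommGroup H] [InnerProductSpace ℝ H]
    (T : H →L[ℝ] H) (hsym : ∀ x y : H, ⟪T x, y⟫ = ⟪x, T y⟫)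
    (hpos : ∀ z : H, 0 ≤ ⟪T z, z⟫) (x y : H) :
    ⟪T x, y⟫ ^ 2 ≤ ⟪T x, x⟫ * ⟪T y, y⟫ := by
  have h : ∀ t : ℝ, 0 ≤ ⟪T y, y⟫ * (t * t) + (2 * ⟪T x, y⟫) * t + ⟪T x, x⟫ := by
    intro t
    have h0 := hpos (x + t • y)
    have e1 : ⟪T y, x⟫ = ⟪T x, y⟫ := by
      rw [hsym y x, real_inner_comm]
    have : T (x + t • y) = T x + t • T y := by
      rw [map_add, map_smul]
    rw [this, inner_add_left, inner_add_right, inner_add_right, inner_smul_left,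
      inner_smul_right, inner_smul_left, inner_smul_right, e1] at h0
    simp only [starRingEnd_apply, star_trivial] at h0
    ring_nf at h0 ⊢
    linarith
  have hd := discrim_le_zero h
  rw [discrim] at hd
  nlinarith

/-- A positive symmetric operator annihilates vectors with zero diagonal entry. -/
lemma aux_kill {H : Type} [NormedAddCommGroup H] [InnerProductSpace ℝ H]
    (T : H →L[ℝ] H) (hsym : ∀ x y : H, ⟪T x, y⟫ = ⟪x, T y⟫)
    (hpos : ∀ z : H, 0 ≤ ⟪T z, z⟫) (x : H) (hx : ⟪T x, x⟫ = 0) : T x = 0 := by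
  have h := aux_cs T hsym hpos x (T x)
  rw [hx, zero_mul] at h
  have h2 : ⟪T x, T x⟫ = 0 := by
    have := real_inner_self_nonneg (x := T x)
    nlinarith
  exact inner_self_eq_zero.mp h2

set_option synthInstance.maxHeartbeats 1000000 in
/-- The sequence `(A, 0, 0, …)` is not the diagonal of any self-adjoint operator with
spectrum `{0, A, B}`, even though the conditions `C - D = N·A + k·B` and
`C ≥ (N+k)·A` hold with `N = 1`, `k = -1`, where `C = ∑_{d_i < A} d_i = 0` and
`D = ∑_{d_i ≥ A} (B - d_i) = B - A`. -/
theorem stmt18 (A B : ℝ) (hA : 0 < A) (hAB : A < B)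
    (d : ℕ → ℝ) (hd : d = fun i => if i = 0 then A else 0) :
    (¬ ∃ (H : Type) (_ : NormedAddCommGroup H) (_ : InnerProductSpace ℝ H)
      (_ : CompleteSpace H) (E : H →L[ℝ] H) (b : HilbertBasis ℕ ℝ H),
      IsSelfAdjoint E ∧ spectrum ℝ E = {0, A, B} ∧ ∀ i, ⟪E (b i), b i⟫ = d i) ∧
    (∑' i : {i // d i < A}, ENNReal.ofReal (d i.1)) = 0 ∧
    (∑' i : {i // A ≤ d i}, ENNReal.ofReal (B - d i.1)) = ENNReal.ofReal (B - A) ∧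
    (0 : ℝ) - (B - A) = 1 * A + (-1 : ℤ) * B ∧
    (((1 : ℕ) : ℝ) + (-1 : ℤ)) * A ≤ 0 := by
  subst hd
  refine ⟨?_, ?_, ?_, by push_cast; ring, by push_cast; norm_num⟩
  · rintro ⟨H, _, _, _, E, b, hsa, hspec, hdiag⟩
    have hsym : ∀ x y : H, ⟪E x, y⟫ = ⟪x, E y⟫ := fun x y => hsa.isSymmetric x y
    have hb0 : ‖b 0‖ = 1 := b.orthonormal.1 0
    have hbne : (b 0 : H) ≠ 0 := by
      intro h; rw [h, norm_zero] at hb0; norm_num at hb0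
    have hnt : Nontrivial H := nontrivial_of_ne (b 0) 0 hbne
    -- Step 1: E is positive
    have hpos : ∀ x : H, 0 ≤ ⟪E x, x⟫ := by
      set S : Set ℝ := {r | ∃ x : H, ‖x‖ = 1 ∧ ⟪E x, x⟫ = r} with hS
      have hmemS : ∀ x : H, x ≠ 0 → (‖x‖ ^ 2)⁻¹ * ⟪E x, x⟫ ∈ S := by
        intro x hx
        have hxpos : (0 : ℝ) < ‖x‖ := norm_pos_iff.mpr hx
        refine ⟨‖x‖⁻¹ • x, ?_, ?_⟩
        · rw [norm_smul, norm_inv, norm_norm, inv_mul_cancel₀ hxpos.ne']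
        · rw [map_smul, real_inner_smul_left, real_inner_smul_right, sq, mul_inv]
          ring
      have hSne : S.Nonempty := ⟨_, hmemS (b 0) hbne⟩
      have hSbdd : BddBelow S := by
        refine ⟨-‖E‖, ?_⟩
        rintro r ⟨x, hx1, rfl⟩
        have h1 : |⟪E x, x⟫| ≤ ‖E x‖ * ‖x‖ := abs_real_inner_le_norm _ _
        have h2 : ‖E x‖ ≤ ‖E‖ * ‖x‖ := E.le_opNorm x
        rw [hx1] at h1 h2
        simp only [mul_one] at h1 h2
        cases abs_le.mp h1 with
        | intro hl hr => linarith
      set m : ℝ := sInf S with hm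
      have hmle : ∀ r ∈ S, m ≤ r := fun r hr => csInf_le hSbdd hr
      -- key claim : 0 ≤ m
      rcases le_or_gt 0 m with hm0 | hm0
      · intro x
        rcases eq_or_ne x 0 with rfl | hx
        · simp
        · have h1 := hmle _ (hmemS x hx)
          have hxpos : (0 : ℝ) < ‖x‖ := norm_pos_iff.mpr hx
          have hx2 : (0 : ℝ) < ‖x‖ ^ 2 := pow_pos hxpos 2
          have h3 : 0 ≤ (‖x‖ ^ 2)⁻¹ * ⟪E x, x⟫ := le_trans hm0 h1
          have h4 := mul_le_mul_of_nonneg_left h3 hx2.le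
          rw [← mul_assoc, mul_inv_cancel₀ hx2.ne', one_mul] at h4
          simpa using h4
      · exfalso
        -- m < 0, so m ∉ spectrum, so E - m is invertible
        have hmns : m ∉ spectrum ℝ E := by
          rw [hspec]
          intro hmem
          simp only [Set.mem_insert_iff, Set.mem_singleton_iff] at hmem
          rcases hmem with h | h | h <;> rw [h] at hm0 <;> linarith
        obtain ⟨u, hu⟩ := spectrum.notMem_iff.mp hmns
        set T : H →L[ℝ] H := E - algebraMap ℝ (H →L[ℝ] H) m with hT
        have hTx : ∀ x : H, T x = E x - m • x := by
          intro x
          simp [hT, Algebra.algebraMap_eq_smul_one]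
        have hux : ∀ x : H, (u : H →L[ℝ] H) x = -(T x) := by
          intro x
          rw [hu]
          simp [hTx, Algebra.algebraMap_eq_smul_one]
        have hTsym : ∀ x y : H, ⟪T x, y⟫ = ⟪x, T y⟫ := by
          intro x y
          rw [hTx, hTx, inner_sub_left, inner_sub_right, hsym, real_inner_smul_left,
            real_inner_smul_right]
        have hTpos : ∀ z : H, 0 ≤ ⟪T z, z⟫ := by
          intro z
          rcases eq_or_ne z 0 with rfl | hz
          · simp
          · have h1 := hmle _ (hmemS z hz)
            have hz2 : (0 : ℝ) < ‖z‖ ^ 2 := pow_pos (norm_pos_iff.mpr hz) 2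
            have h4 := mul_le_mul_of_nonneg_left h1 hz2.le
            rw [← mul_assoc, mul_inv_cancel₀ hz2.ne', one_mul] at h4
            rw [hTx, inner_sub_left, real_inner_smul_left, real_inner_self_eq_norm_sq]
            linarith
        set M : ℝ := ‖((u⁻¹ : (H →L[ℝ] H)ˣ) : H →L[ℝ] H)‖ with hM
        have hinv : ∀ x : H, ‖x‖ ≤ M * ‖T x‖ := by
          intro x
          have h1 : ((u⁻¹ : (H →L[ℝ] H)ˣ) : H →L[ℝ] H) ((u : H →L[ℝ] H) x) = x := by
            have h2 : (((u⁻¹ : (H →L[ℝ] H)ˣ) : H →L[ℝ] H) * (u : H →L[ℝ] H)) x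
                = (1 : H →L[ℝ] H) x := by rw [Units.inv_mul]
            rw [ContinuousLinearMap.mul_apply, ContinuousLinearMap.one_apply] at h2
            exact h2
          calc ‖x‖ = ‖((u⁻¹ : (H →L[ℝ] H)ˣ) : H →L[ℝ] H) ((u : H →L[ℝ] H) x)‖ := by rw [h1]
            _ ≤ M * ‖(u : H →L[ℝ] H) x‖ := ContinuousLinearMap.le_opNorm _ _
            _ = M * ‖T x‖ := by rw [hux, norm_neg]
        have hMpos : (0 : ℝ) < M := by
          by_contra hMc
          push_neg at hMc
          have := hinv (b 0)
          rw [hb0] at this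
          nlinarith [norm_nonneg (T (b 0))]
        have hTne : T ≠ 0 := by
          intro h
          have := hinv (b 0)
          rw [hb0, h] at this
          simp at this
          linarith
        have hKpos : (0 : ℝ) < ‖T‖ := norm_pos_iff.mpr hTne
        -- ‖T x‖ ^ 2 ≤ ‖T‖ * ⟪T x, x⟫
        have hbound : ∀ x : H, ‖T x‖ ^ 2 ≤ ‖T‖ * ⟪T x, x⟫ := by
          intro x
          have hcs := aux_cs T hTsym hTpos x (T x)
          have h1 : ⟪T x, T x⟫ = ‖T x‖ ^ 2 := real_inner_self_eq_norm_sq _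
          have h2 : ⟪T (T x), T x⟫ ≤ ‖T‖ * ‖T x‖ ^ 2 := by
            calc ⟪T (T x), T x⟫ ≤ ‖T (T x)‖ * ‖T x‖ := real_inner_le_norm _ _
              _ ≤ (‖T‖ * ‖T x‖) * ‖T x‖ :=
                mul_le_mul_of_nonneg_right (T.le_opNorm _) (norm_nonneg _)
              _ = ‖T‖ * ‖T x‖ ^ 2 := by ring
          rcases eq_or_ne (T x) 0 with h | h
          · rw [h]
            simp
          · have hpos1 : (0 : ℝ) < ‖T x‖ := norm_pos_iff.mpr h
            have hsq : (0 : ℝ) < ‖T x‖ ^ 2 := pow_pos hpos1 2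
            have e1 : ⟪T x, x⟫ * ⟪T (T x), T x⟫ ≤ ⟪T x, x⟫ * (‖T‖ * ‖T x‖ ^ 2) :=
              mul_le_mul_of_nonneg_left h2 (hTpos x)
            have e3 : ‖T x‖ ^ 2 * ‖T x‖ ^ 2 ≤ (‖T‖ * ⟪T x, x⟫) * ‖T x‖ ^ 2 := by
              calc ‖T x‖ ^ 2 * ‖T x‖ ^ 2 = ⟪T x, T x⟫ ^ 2 := by rw [h1]; ring
                _ ≤ ⟪T x, x⟫ * ⟪T (T x), T x⟫ := hcs
                _ ≤ ⟪T x, x⟫ * (‖T‖ * ‖T x‖ ^ 2) := e1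
                _ = (‖T‖ * ⟪T x, x⟫) * ‖T x‖ ^ 2 := by ring
            exact le_of_mul_le_mul_right e3 hsq
        -- every element of S is ≥ m + δ
        set δ : ℝ := M⁻¹ ^ 2 / ‖T‖ with hδ
        have hδpos : (0 : ℝ) < δ := div_pos (pow_pos (inv_pos.mpr hMpos) 2) hKpos
        have hlb : ∀ r ∈ S, m + δ ≤ r := by
          rintro r ⟨x, hx1, rfl⟩
          have h1 : (1 : ℝ) ≤ M * ‖T x‖ := by
            have := hinv x
            rwa [hx1] at this
          have h2 : M⁻¹ ≤ ‖T x‖ := by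
            have h2a := mul_le_mul_of_nonneg_left h1 (inv_pos.mpr hMpos).le
            rwa [← mul_assoc, inv_mul_cancel₀ hMpos.ne', one_mul, mul_one] at h2a
          have h3 : M⁻¹ ^ 2 ≤ ‖T x‖ ^ 2 := by
            have : (0 : ℝ) ≤ M⁻¹ := by positivity
            nlinarith
          have h4 := hbound x
          have h5 : ⟪T x, x⟫ = ⟪E x, x⟫ - m := by
            rw [hTx, inner_sub_left, real_inner_smul_left, real_inner_self_eq_norm_sq, hx1]
            ring
          have h6 : M⁻¹ ^ 2 ≤ ‖T‖ * (⟪E x, x⟫ - m) := by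
            rw [← h5]
            linarith
          have h7 : δ ≤ ⟪E x, x⟫ - m := by
            rw [hδ, div_le_iff₀ hKpos]
            nlinarith
          linarith
        have := le_csInf hSne hlb
        rw [← hm] at this
        linarith
    -- Step 2: E (b i) = 0 for i ≠ 0
    have hzero : ∀ i : ℕ, i ≠ 0 → E (b i) = 0 := by
      intro i hi
      refine aux_kill E hsym hpos (b i) ?_
      have := hdiag i
      simp [hi] at this
      exact this
    -- Step 3: E (b 0) = A • b 0
    have hEb0 : E (b 0) = A • b 0 := by
      have hrepr : ∀ x y : H, (∀ i, ⟪b i, x⟫ = ⟪b i, y⟫) → x = y := by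
        intro x y h
        have : b.repr x = b.repr y := by
          apply lp.ext
          funext i
          rw [b.repr_apply_apply, b.repr_apply_apply, h i]
        exact b.repr.injective this
      refine hrepr _ _ fun i => ?_
      rcases eq_or_ne i 0 with rfl | hi
      · have h0 := hdiag 0
        norm_num at h0
        rw [real_inner_comm, h0, real_inner_smul_right, real_inner_self_eq_norm_sq, hb0]
        norm_num
      · have h1 : ⟪b i, E (b 0)⟫ = 0 := by
          rw [← hsym, hzero i hi, inner_zero_left]
        have h2 : ⟪b i, A • b 0⟫ = 0 := by
          rw [real_inner_smul_right, b.orthonormal.2 hi, mul_zero]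
        rw [h1, h2]
    -- Step 4: E ∘L E = A • E
    have hE2 : E ∘L E = A • E := by
      have hdense : Dense ((Submodule.span ℝ (Set.range b) : Submodule ℝ H) : Set H) := by
        rw [Submodule.dense_iff_topologicalClosure_eq_top, b.dense_span]
      refine ContinuousLinearMap.ext_on hdense ?_
      rintro x ⟨i, rfl⟩
      rcases eq_or_ne i 0 with rfl | hi
      · simp [hEb0, map_smul]
      · simp [hzero i hi]
    -- Step 5: B ∉ spectrum E, contradiction
    have hBmem : B ∈ spectrum ℝ E := by
      rw [hspec]; right; right; rfl
    have hBne : B ≠ 0 := by linarith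
    have hBA : B - A ≠ 0 := by linarith
    apply spectrum.notMem_iff.mpr _ hBmem
    have hEE : ∀ x : H, E (E x) = A • E x := by
      intro x
      have := ContinuousLinearMap.ext_iff.mp hE2 x
      simpa using this
    have hc : B * (B * (B - A))⁻¹ - B⁻¹ - (B * (B - A))⁻¹ * A = 0 := by
      field_simp
      ring
    refine isUnit_iff_exists.mpr ⟨(B⁻¹) • (1 : H →L[ℝ] H) + (B * (B - A))⁻¹ • E, ?_, ?_⟩
    · refine ContinuousLinearMap.ext fun x => ?_
      simp only [ContinuousLinearMap.mul_apply, ContinuousLinearMap.sub_apply,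
        ContinuousLinearMap.add_apply, ContinuousLinearMap.smul_apply,
        ContinuousLinearMap.one_apply, Algebra.algebraMap_eq_smul_one, map_add, map_smul,
        hEE, ContinuousLinearMap.coe_smul', Pi.smul_apply]
      match_scalars
      · field_simp
      · linarith [hc]
    · refine ContinuousLinearMap.ext fun x => ?_
      simp only [ContinuousLinearMap.mul_apply, ContinuousLinearMap.sub_apply,
        ContinuousLinearMap.add_apply, ContinuousLinearMap.smul_apply,
        ContinuousLinearMap.one_apply, Algebra.algebraMap_eq_smul_one, map_add, map_smul,
        map_sub, hEE, ContinuousLinearMap.coe_smul', Pi.smul_apply]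
      match_scalars
      · field_simp
      · linarith [hc]
  · have h : ∀ i : {i : ℕ // (if i = 0 then A else 0) < A},
        ENNReal.ofReal (if i.1 = 0 then A else 0) = 0 := by
      rintro ⟨i, hi⟩
      rcases eq_or_ne i 0 with rfl | hne
      · simp at hi
      · simp [hne]
    rw [tsum_congr h, tsum_zero]
  · have h0 : A ≤ (if (0 : ℕ) = 0 then A else 0) := by simp
    rw [tsum_eq_single (⟨0, h0⟩ : {i : ℕ // A ≤ (if i = 0 then A else 0)})]
    · simp
    · rintro ⟨i, hi⟩ hne
      rcases eq_or_ne i 0 with rfl | h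
      · exact absurd (Subtype.ext rfl) hne
      · simp [h] at hi
        linarith
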